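/- Let f be a form of degree 2d and for each α ∈ Δ let n_α = |{i : α_i ≠ 0}|. If for every i = 1,...,n, f_{2d,i} ≥ Σ_{α∈Δ, α_i≠0} α_i·(|f_α|/(2d))^{2d/(α_i·n_α)}, then f is a sum of squares. -/

import Mathlib

open MvPolynomial


theorem sos_map {R S : Type*} [CommRing R] [CommRing S] (g : R →+* S) {p : R} (h : IsSumSq p) :
    IsSumSq (g p) := by
  induction h with
  | zero => simpa using IsSumSq.zero
  | @sq_add a s _ ih => simpa using IsSumSq.sq_add (g a) ih

theorem sos_sq_mul {R : Type*} [CommRing R] (x : R) {p : R} (h : IsSumSq p) : IsSumSq (x^2 * p) := by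
  induction h with
  | zero => simpa using IsSumSq.zero
  | @sq_add a s _ ih =>
      have := IsSumSq.sq_add (x*a) ih
      have e : (x*a)*(x*a) + x^2*s = x^2*(a*a+s) := by ring
      rwa [e] at this

theorem sos_C_mul {n : ℕ} {c : ℝ} (hc : 0 ≤ c) {p : MvPolynomial (Fin n) ℝ} (h : IsSumSq p) :
    IsSumSq (C c * p) := by
  have : MvPolynomial.C (σ := Fin n) c = (C (Real.sqrt c))^2 := by
    rw [← map_pow, Real.sq_sqrt hc]
  rw [this]; exact sos_sq_mul _ h

theorem sos_sq {R : Type*} [CommRing R] (x : R) : IsSumSq (x^2) := by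
  simpa [sq] using IsSumSq.sq_add x IsSumSq.zero

noncomputable def U {n : ℕ} (d : ℕ) (q : Fin n → ℕ) : MvPolynomial (Fin n) ℝ :=
  (∑ i, C (q i : ℝ) * X i ^ (2*d)) - C ((2*d : ℕ) : ℝ) * ∏ i, X i ^ q i

theorem U_midpoint2 {n : ℕ} (d : ℕ) (σ τ : Fin n → ℕ) :
    2 * U d (σ + τ) = U d (2 • σ) + U d (2 • τ)
      + C ((2*d : ℕ) : ℝ) * ((∏ i, X i ^ σ i) - (∏ i, X i ^ τ i))^2 := by
  have e1 : (∏ i, X i ^ ((σ + τ) i)) = (∏ i, (X i : MvPolynomial (Fin n) ℝ) ^ σ i) * (∏ i, X i ^ τ i) := by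
    rw [← Finset.prod_mul_distrib]
    exact Finset.prod_congr rfl (fun i _ => by simp [pow_add])
  have e2 : (∏ i, X i ^ ((2 • σ) i)) = (∏ i, (X i : MvPolynomial (Fin n) ℝ) ^ σ i)^2 := by
    rw [← Finset.prod_pow]
    exact Finset.prod_congr rfl (fun i _ => by rw [Pi.smul_apply, smul_eq_mul, mul_comm, pow_mul])
  have e2' : (∏ i, X i ^ ((2 • τ) i)) = (∏ i, (X i : MvPolynomial (Fin n) ℝ) ^ τ i)^2 := by
    rw [← Finset.prod_pow]
    exact Finset.prod_congr rfl (fun i _ => by rw [Pi.smul_apply, smul_eq_mul, mul_comm, pow_mul])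
  have e3 : (∑ i, C (((σ + τ) i : ℕ) : ℝ) * X i ^ (2*d))
      = (∑ i, C ((σ i : ℕ) : ℝ) * X i ^ (2*d)) + ∑ i, C ((τ i : ℕ) : ℝ) * X i ^ (2*d) := by
    rw [← Finset.sum_add_distrib]
    refine Finset.sum_congr rfl (fun i _ => ?_)
    rw [Pi.add_apply, Nat.cast_add, map_add]; ring
  have e4 : ∀ ρ : Fin n → ℕ, (∑ i, C (((2 • ρ) i : ℕ) : ℝ) * X i ^ (2*d))
      = 2 * ∑ i, C ((ρ i : ℕ) : ℝ) * X i ^ (2*d) := by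
    intro ρ
    rw [Finset.mul_sum]
    refine Finset.sum_congr rfl (fun i _ => ?_)
    rw [Pi.smul_apply, smul_eq_mul, Nat.cast_mul, map_mul]
    simp only [Nat.cast_ofNat, map_ofNat]
    ring

  simp only [U, e1, e2, e2', e3, e4]
  ring

theorem half_two {n : ℕ} : (C (1/2 : ℝ) : MvPolynomial (Fin n) ℝ) * 2 = 1 := by
  rw [show (2 : MvPolynomial (Fin n) ℝ) = C 2 from (map_ofNat _ 2).symm, ← map_mul]
  norm_num

theorem U_midpoint {n : ℕ} (d : ℕ) (σ τ : Fin n → ℕ) :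
    U d (σ + τ) = C (1/2 : ℝ) * U d (2 • σ) + C (1/2 : ℝ) * U d (2 • τ)
      + C ((d : ℕ) : ℝ) * ((∏ i, X i ^ σ i) - (∏ i, X i ^ τ i))^2 := by
  have h2 := U_midpoint2 d σ τ
  rw [show ((2*d : ℕ) : ℝ) = 2 * (d:ℝ) by push_cast; ring] at h2
  rw [show (C (2 * (d:ℝ)) : MvPolynomial (Fin n) ℝ) = 2 * C (d : ℝ) by rw [map_mul, map_ofNat]] at h2
  have ht := half_two (n := n)
  linear_combination (C (1/2:ℝ)) * h2 +
    (C ((d:ℕ) : ℝ) * ((∏ i, X i ^ σ i) - (∏ i, X i ^ τ i))^2 - U d (σ + τ)) * ht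

/-- Pair of values on two coordinates. -/
def Q2 {n : ℕ} (i j : Fin n) (a b : ℕ) : Fin n → ℕ :=
  fun k => if k = i then a else if k = j then b else 0

def step2 (p : ℕ × ℕ) : ℕ × ℕ :=
  if p.1 = 0 ∨ p.2 = 0 then p else if p.1 ≤ p.2 then (2*p.1, p.2 - p.1) else (p.1 - p.2, 2*p.2)

theorem step2_sum (p : ℕ × ℕ) : (step2 p).1 + (step2 p).2 = p.1 + p.2 := by
  unfold step2; split <;> [skip; split] <;> simp <;> omega

def SRel {n : ℕ} (c : ℝ) (P Q : MvPolynomial (Fin n) ℝ) : Prop :=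
  ∃ S, IsSumSq S ∧ P = C c * Q + S

theorem SRel.refl {n : ℕ} (P : MvPolynomial (Fin n) ℝ) : SRel 1 P P :=
  ⟨0, IsSumSq.zero, by simp⟩

theorem SRel.trans {n : ℕ} {c c' : ℝ} (hc : 0 ≤ c) {P Q R : MvPolynomial (Fin n) ℝ}
    (h1 : SRel c P Q) (h2 : SRel c' Q R) : SRel (c*c') P R := by
  obtain ⟨S, hS, e⟩ := h1
  obtain ⟨S', hS', e'⟩ := h2
  exact ⟨C c * S' + S, (sos_C_mul hc hS').add hS, by rw [e, e', map_mul]; ring⟩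

theorem SRel.sos {n : ℕ} {c : ℝ} (hc : 0 ≤ c) {P Q : MvPolynomial (Fin n) ℝ}
    (h : SRel c P Q) (hQ : IsSumSq Q) : IsSumSq P := by
  obtain ⟨S, hS, e⟩ := h
  rw [e]; exact (sos_C_mul hc hQ).add hS

theorem SRel.self_sos {n : ℕ} {c : ℝ} (hc0 : 0 ≤ c) (hc : c < 1) {P : MvPolynomial (Fin n) ℝ}
    (h : SRel c P P) : IsSumSq P := by
  obtain ⟨S, hS, e⟩ := h
  have h1 : C (1 - c) * P = S := by
    rw [map_sub, map_one]; linear_combination e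
  have h2 : P = C (1-c)⁻¹ * S := by
    rw [← h1, ← mul_assoc, ← map_mul, inv_mul_cancel₀ (by linarith), map_one, one_mul]
  rw [h2]
  exact sos_C_mul (inv_nonneg.2 (by linarith)) hS

theorem U_single {n : ℕ} (d : ℕ) (i : Fin n) :
    U d (fun k => if k = i then 2*d else 0) = 0 := by
  unfold U
  have h1 : (∑ k, C ((if k = i then 2*d else 0 : ℕ) : ℝ) * X k ^ (2*d))
      = C ((2*d : ℕ) : ℝ) * (X i : MvPolynomial (Fin n) ℝ) ^ (2*d) := by
    rw [Finset.sum_eq_single i]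
    · simp
    · intro k _ hk; simp [hk]
    · simp
  have h2 : (∏ k, (X k : MvPolynomial (Fin n) ℝ) ^ (if k = i then 2*d else 0))
      = (X i : MvPolynomial (Fin n) ℝ) ^ (2*d) := by
    rw [Finset.prod_eq_single i]
    · simp
    · intro k _ hk; simp [hk]
    · simp
  rw [h1, h2, sub_self]

theorem step_rel {n : ℕ} (d : ℕ) {i j : Fin n} (hij : i ≠ j) {a b : ℕ} (hab : a + b = 2*d) :
    SRel (1/2) (U d (Q2 i j a b)) (U d (Q2 i j (step2 (a,b)).1 (step2 (a,b)).2)) := by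
  have hdnn : (0:ℝ) ≤ ((d:ℕ):ℝ) := Nat.cast_nonneg d
  by_cases ha : a = 0
  · have hfix : step2 (a, b) = (a, b) := by unfold step2; simp [ha]
    have hz : Q2 i j a b = (fun k => if k = j then 2*d else 0) := by
      funext k
      unfold Q2
      subst ha
      by_cases hk : k = i <;> by_cases hk' : k = j <;> simp_all <;> omega
    rw [hfix, hz, U_single]
    exact ⟨0, IsSumSq.zero, by simp⟩
  · by_cases hb : b = 0
    · have hfix : step2 (a, b) = (a, b) := by unfold step2; simp [hb]
      have hz : Q2 i j a b = (fun k => if k = i then 2*d else 0) := by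
        funext k
        unfold Q2
        subst hb
        by_cases hk : k = i <;> simp_all <;> omega
      rw [hfix, hz, U_single]
      exact ⟨0, IsSumSq.zero, by simp⟩
    · by_cases hle : a ≤ b
      · have hbd : d ≤ b := by omega
        set σ : Fin n → ℕ := Q2 i j 0 d with hσ
        set τ : Fin n → ℕ := Q2 i j a (b - d) with hτ
        have eq1 : σ + τ = Q2 i j a b := by
          funext k
          simp only [Pi.add_apply, hσ, hτ, Q2]
          by_cases hk : k = i <;> by_cases hk' : k = j <;> simp_all <;> omega
        have eq2 : (2 • σ) = (fun k => if k = j then 2*d else 0) := by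
          funext k
          simp only [Pi.smul_apply, smul_eq_mul, hσ, Q2]
          by_cases hk : k = i <;> by_cases hk' : k = j <;> simp_all
        have eq3 : (2 • τ) = Q2 i j (step2 (a,b)).1 (step2 (a,b)).2 := by
          have hst : step2 (a, b) = (2*a, b - a) := by unfold step2; simp [ha, hb, hle]
          funext k
          simp only [Pi.smul_apply, smul_eq_mul, hτ, Q2, hst]
          by_cases hk : k = i <;> by_cases hk' : k = j <;> simp_all <;> omega
        have hm := U_midpoint d σ τ
        rw [eq1, eq2, eq3, U_single] at hm
        refine ⟨C ((d:ℕ):ℝ) * ((∏ k, X k ^ σ k) - (∏ k, X k ^ τ k))^2,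
          sos_C_mul hdnn (sos_sq _), ?_⟩
        rw [hm]; ring
      · have had : d ≤ a := by omega
        set σ : Fin n → ℕ := Q2 i j d 0 with hσ
        set τ : Fin n → ℕ := Q2 i j (a - d) b with hτ
        have eq1 : σ + τ = Q2 i j a b := by
          funext k
          simp only [Pi.add_apply, hσ, hτ, Q2]
          by_cases hk : k = i <;> by_cases hk' : k = j <;> simp_all <;> omega
        have eq2 : (2 • σ) = (fun k => if k = i then 2*d else 0) := by
          funext k
          simp only [Pi.smul_apply, smul_eq_mul, hσ, Q2]
          by_cases hk : k = i <;> by_cases hk' : k = j <;> simp_all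
        have eq3 : (2 • τ) = Q2 i j (step2 (a,b)).1 (step2 (a,b)).2 := by
          have hst : step2 (a, b) = (a - b, 2*b) := by
            unfold step2; simp [ha, hb, hle]
          funext k
          simp only [Pi.smul_apply, smul_eq_mul, hτ, Q2, hst]
          by_cases hk : k = i <;> by_cases hk' : k = j <;> simp_all <;> omega
        have hm := U_midpoint d σ τ
        rw [eq1, eq2, eq3, U_single] at hm
        refine ⟨C ((d:ℕ):ℝ) * ((∏ k, X k ^ σ k) - (∏ k, X k ^ τ k))^2,
          sos_C_mul hdnn (sos_sq _), ?_⟩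
        rw [hm]; ring

theorem step2_iter_sum (p : ℕ × ℕ) (k : ℕ) :
    (step2^[k] p).1 + (step2^[k] p).2 = p.1 + p.2 := by
  induction k with
  | zero => simp
  | succ k ih => rw [Function.iterate_succ_apply', step2_sum]; exact ih

theorem iter_rel {n : ℕ} (d : ℕ) {i j : Fin n} (hij : i ≠ j) (a b : ℕ) (hab : a + b = 2*d)
    (k : ℕ) : SRel ((1/2)^k) (U d (Q2 i j a b))
      (U d (Q2 i j (step2^[k] (a,b)).1 (step2^[k] (a,b)).2)) := by
  induction k with
  | zero => simpa using SRel.refl _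
  | succ k ih =>
      have hsum : (step2^[k] (a,b)).1 + (step2^[k] (a,b)).2 = 2*d := by
        rw [step2_iter_sum]; exact hab
      have hstep := step_rel d hij hsum
      have := SRel.trans (by positivity) ih hstep
      rw [← pow_succ] at this
      rw [Function.iterate_succ_apply']
      exact this

theorem twovar_sos {n : ℕ} (d : ℕ) {i j : Fin n} (hij : i ≠ j) (a b : ℕ) (hab : a + b = 2*d) :
    IsSumSq (U d (Q2 i j a b)) := by
  set f : ℕ → ℕ × ℕ := fun k => step2^[k] (a,b) with hf
  have hmaps : ∀ k ∈ Finset.range ((2*d+1)*(2*d+1)+1), f k ∈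
      (Finset.range (2*d+1)) ×ˢ (Finset.range (2*d+1)) := by
    intro k _
    have := step2_iter_sum (a,b) k
    simp only [Finset.mem_product, Finset.mem_range, hf]
    omega
  have hcard : ((Finset.range (2*d+1)) ×ˢ (Finset.range (2*d+1))).card
      < (Finset.range ((2*d+1)*(2*d+1)+1)).card := by
    simp [Finset.card_product]
  obtain ⟨k, _, l, _, hkl, hfkl⟩ :=
    Finset.exists_ne_map_eq_of_card_lt_of_maps_to hcard hmaps
  wlog hlt : k < l generalizing k l
  · exact this l ‹_› k ‹_› hkl.symm hfkl.symm (by omega)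
  -- x := f k is periodic with period l - k ≥ 1
  have hcycle : step2^[l-k] (f k) = f k := by
    rw [hf]
    show step2^[l-k] (step2^[k] (a,b)) = step2^[k] (a,b)
    rw [← Function.iterate_add_apply, show l - k + k = l by omega]
    exact hfkl.symm
  have hsumx : (f k).1 + (f k).2 = 2*d := by rw [hf]; rw [step2_iter_sum]; exact hab
  have hxsos : IsSumSq (U d (Q2 i j (f k).1 (f k).2)) := by
    have hrel := iter_rel d hij (f k).1 (f k).2 hsumx (l-k)
    rw [show ((f k).1, (f k).2) = f k by rfl, hcycle] at hrel
    exact SRel.self_sos (by positivity) (by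
      apply pow_lt_one₀ (by norm_num) (by norm_num)
      omega) hrel
  have hrel0 := iter_rel d hij a b hab k
  exact SRel.sos (by positivity) hrel0 hxsos

/-- The inductive three-variable split step. -/
theorem moveD_sos {n : ℕ} {d : ℕ} (q : Fin n → ℕ) {i j k : Fin n}
    (hij : i ≠ j) (hik : i ≠ k) (hjk : j ≠ k)
    (hi : q i ≠ 0) (hj : q j ≠ 0) (hk : q k ≠ 0)
    (hki : q i ≤ q k) (hkj : q j ≤ q k)
    (hev : ∀ m, Even (q m)) (hsum : ∑ m, q m = 2*d)
    (IH : ∀ q' : Fin n → ℕ,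
      (Finset.univ.filter (fun m => q' m ≠ 0)).card
        < (Finset.univ.filter (fun m => q m ≠ 0)).card →
      (∀ m, Even (q' m)) → (∑ m, q' m = 2*d) → IsSumSq (U d q')) :
    IsSumSq (U d q) := by
  classical
  set p : Fin n → ℕ := fun m => q m / 2 with hp
  have hq2 : ∀ m, q m = 2 * p m := by
    intro m; obtain ⟨r, hr⟩ := hev m; simp [hp]; omega
  set σ : Fin n → ℕ := fun m =>
    if m = i then q i else if m = j then 0 else if m = k then p k + p j - p i else p m with hσ
  set τ : Fin n → ℕ := fun m =>
    if m = i then 0 else if m = j then q j else if m = k then p k + p i - p j else p m with hτ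
  have hpik : p i ≤ p k := by have := hq2 i; have := hq2 k; omega
  have hpjk : p j ≤ p k := by have := hq2 j; have := hq2 k; omega
  have hpi : p i ≠ 0 := by have := hq2 i; omega
  have hpj : p j ≠ 0 := by have := hq2 j; omega
  have hστ : σ + τ = q := by
    funext m
    simp only [Pi.add_apply, hσ, hτ]
    by_cases h1 : m = i
    · subst h1; simp [hij, hik, hq2 m]
    · by_cases h2 : m = j
      · subst h2; simp [h1, hjk, hq2 m]
      · by_cases h3 : m = k
        · subst h3; simp [h1, h2]; have := hq2 m; omega
        · simp [h1, h2, h3]; have := hq2 m; omega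
  -- sums
  have sum_split : ∀ f : Fin n → ℕ, ∑ m, f m
      = f i + (f j + (f k + ∑ m ∈ ((Finset.univ.erase i).erase j).erase k, f m)) := by
    intro f
    rw [← Finset.add_sum_erase _ f (Finset.mem_univ i),
        ← Finset.add_sum_erase _ f (by simp [Finset.mem_erase, hij.symm] : j ∈ Finset.univ.erase i),
        ← Finset.add_sum_erase _ f (by simp [Finset.mem_erase, hik.symm, hjk.symm] :
          k ∈ (Finset.univ.erase i).erase j)]
  have tail_σ : ∑ m ∈ ((Finset.univ.erase i).erase j).erase k, σ m
      = ∑ m ∈ ((Finset.univ.erase i).erase j).erase k, p m := by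
    refine Finset.sum_congr rfl (fun m hm => ?_)
    simp only [Finset.mem_erase] at hm
    simp [hσ, hm.1, hm.2.1, hm.2.2.1]
  have tail_τ : ∑ m ∈ ((Finset.univ.erase i).erase j).erase k, τ m
      = ∑ m ∈ ((Finset.univ.erase i).erase j).erase k, p m := by
    refine Finset.sum_congr rfl (fun m hm => ?_)
    simp only [Finset.mem_erase] at hm
    simp [hτ, hm.1, hm.2.1, hm.2.2.1]
  have tail_q : ∑ m ∈ ((Finset.univ.erase i).erase j).erase k, q m
      = 2 * ∑ m ∈ ((Finset.univ.erase i).erase j).erase k, p m := by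
    rw [Finset.mul_sum]
    exact Finset.sum_congr rfl (fun m _ => hq2 m)
  have hqsplit := sum_split q
  rw [hsum] at hqsplit
  have hσi : σ i = q i := by simp [hσ]
  have hσj : σ j = 0 := by simp [hσ, hij.symm]
  have hσk : σ k = p k + p j - p i := by simp [hσ, hik.symm, hjk.symm]
  have hτi : τ i = 0 := by simp [hτ]
  have hτj : τ j = q j := by simp [hτ, hij.symm]
  have hτk : τ k = p k + p i - p j := by simp [hτ, hik.symm, hjk.symm]
  have hσsum : ∑ m, σ m = d := by
    rw [sum_split σ, tail_σ, hσi, hσj, hσk]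
    have h1 := hq2 i; have h2 := hq2 j; have h3 := hq2 k
    rw [tail_q] at hqsplit
    omega
  have hτsum : ∑ m, τ m = d := by
    rw [sum_split τ, tail_τ, hτi, hτj, hτk]
    have h1 := hq2 i; have h2 := hq2 j; have h3 := hq2 k
    rw [tail_q] at hqsplit
    omega
  -- supports
  have hfilter_σ : Finset.univ.filter (fun m => (2 • σ) m ≠ 0)
      = (Finset.univ.filter (fun m => q m ≠ 0)).erase j := by
    ext m
    simp only [Finset.mem_filter, Finset.mem_erase, Finset.mem_univ, true_and,
      Pi.smul_apply, smul_eq_mul]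
    constructor
    · intro hm
      by_cases h1 : m = i
      · subst h1; exact ⟨hij, hi⟩
      · by_cases h2 : m = j
        · subst h2; rw [hσj] at hm; omega
        · by_cases h3 : m = k
          · subst h3; exact ⟨h2, hk⟩
          · refine ⟨h2, ?_⟩
            simp only [hσ, h1, h2, h3, if_false] at hm
            have := hq2 m; omega
    · rintro ⟨h2, hm⟩
      by_cases h1 : m = i
      · subst h1; rw [hσi]; omega
      · by_cases h3 : m = k
        · subst h3; rw [hσk]; omega
        · simp only [hσ, h1, h2, h3, if_false]
          have := hq2 m; omega
  have hfilter_τ : Finset.univ.filter (fun m => (2 • τ) m ≠ 0)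
      = (Finset.univ.filter (fun m => q m ≠ 0)).erase i := by
    ext m
    simp only [Finset.mem_filter, Finset.mem_erase, Finset.mem_univ, true_and,
      Pi.smul_apply, smul_eq_mul]
    constructor
    · intro hm
      by_cases h1 : m = i
      · subst h1; rw [hτi] at hm; omega
      · by_cases h2 : m = j
        · subst h2; exact ⟨hij.symm, hj⟩
        · by_cases h3 : m = k
          · subst h3; exact ⟨h1, hk⟩
          · refine ⟨h1, ?_⟩
            simp only [hτ, h1, h2, h3, if_false] at hm
            have := hq2 m; omega
    · rintro ⟨h1, hm⟩
      by_cases h2 : m = j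
      · subst h2; rw [hτj]; omega
      · by_cases h3 : m = k
        · subst h3; rw [hτk]; omega
        · simp only [hτ, h1, h2, h3, if_false]
          have := hq2 m; omega
  have hjmem : j ∈ Finset.univ.filter (fun m => q m ≠ 0) := by simp [hj]
  have himem : i ∈ Finset.univ.filter (fun m => q m ≠ 0) := by simp [hi]
  have hcard_σ : (Finset.univ.filter (fun m => (2 • σ) m ≠ 0)).card
      < (Finset.univ.filter (fun m => q m ≠ 0)).card := by
    rw [hfilter_σ]; exact Finset.card_erase_lt_of_mem hjmem
  have hcard_τ : (Finset.univ.filter (fun m => (2 • τ) m ≠ 0)).card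
      < (Finset.univ.filter (fun m => q m ≠ 0)).card := by
    rw [hfilter_τ]; exact Finset.card_erase_lt_of_mem himem
  have hsos_σ : IsSumSq (U d (2 • σ)) := by
    refine IH _ hcard_σ (fun m => ⟨σ m, by simp [two_mul]⟩) ?_
    have : ∑ m, (2 • σ) m = 2 * ∑ m, σ m := by
      rw [Finset.mul_sum]; exact Finset.sum_congr rfl (fun m _ => rfl)
    rw [this, hσsum]
  have hsos_τ : IsSumSq (U d (2 • τ)) := by
    refine IH _ hcard_τ (fun m => ⟨τ m, by simp [two_mul]⟩) ?_
    have : ∑ m, (2 • τ) m = 2 * ∑ m, τ m := by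
      rw [Finset.mul_sum]; exact Finset.sum_congr rfl (fun m _ => rfl)
    rw [this, hτsum]
  have hm := U_midpoint d σ τ
  rw [hστ] at hm
  rw [hm]
  exact ((sos_C_mul (by norm_num) hsos_σ).add (sos_C_mul (by norm_num) hsos_τ)).add
    (sos_C_mul (Nat.cast_nonneg d) (sos_sq _))

theorem evenU_sos_aux {n d : ℕ} (hd : 1 ≤ d) :
    ∀ N (q : Fin n → ℕ), (Finset.univ.filter (fun m => q m ≠ 0)).card ≤ N →
      (∀ m, Even (q m)) → (∑ m, q m = 2*d) → IsSumSq (U d q) := by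
  intro N
  induction N with
  | zero =>
      intro q hc hev hsum
      exfalso
      have hfe : Finset.univ.filter (fun m => q m ≠ 0) = ∅ :=
        Finset.card_eq_zero.1 (Nat.le_zero.1 hc)
      have hz : ∀ m, q m = 0 := by
        intro m
        by_contra hm
        have : m ∈ Finset.univ.filter (fun m => q m ≠ 0) := by simp [hm]
        simp [hfe] at this
      rw [Finset.sum_eq_zero (fun m _ => hz m)] at hsum
      omega
  | succ N ih =>
      intro q hc hev hsum
      by_cases h3 : 3 ≤ (Finset.univ.filter (fun m => q m ≠ 0)).card
      · -- pick three distinct support elements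
        set S := Finset.univ.filter (fun m => q m ≠ 0) with hS
        obtain ⟨i, hiS⟩ := Finset.card_pos.1 (show 0 < S.card by omega)
        have h2' : 0 < (S.erase i).card := by
          have := Finset.card_erase_of_mem hiS; omega
        obtain ⟨j, hjS⟩ := Finset.card_pos.1 h2'
        have h1' : 0 < ((S.erase i).erase j).card := by
          have := Finset.card_erase_of_mem hjS
          have := Finset.card_erase_of_mem hiS
          omega
        obtain ⟨k, hkS⟩ := Finset.card_pos.1 h1'
        have hji : j ≠ i := (Finset.mem_erase.1 hjS).1
        have hkj : k ≠ j := (Finset.mem_erase.1 hkS).1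
        have hki : k ≠ i := (Finset.mem_erase.1 (Finset.mem_of_mem_erase hkS)).1
        have hjS' : j ∈ S := Finset.mem_of_mem_erase hjS
        have hkS' : k ∈ S := Finset.mem_of_mem_erase (Finset.mem_of_mem_erase hkS)
        have hqi : q i ≠ 0 := by simpa [hS] using hiS
        have hqj : q j ≠ 0 := by simpa [hS] using hjS'
        have hqk : q k ≠ 0 := by simpa [hS] using hkS'
        have IH : ∀ q' : Fin n → ℕ,
            (Finset.univ.filter (fun m => q' m ≠ 0)).card
              < (Finset.univ.filter (fun m => q m ≠ 0)).card →
            (∀ m, Even (q' m)) → (∑ m, q' m = 2*d) → IsSumSq (U d q') := by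
          intro q' hlt hev' hsum'
          rw [← hS] at hlt
          exact ih q' (Nat.lt_succ_iff.mp (lt_of_lt_of_le hlt hc)) hev' hsum'
        by_cases c1 : q i ≤ q k ∧ q j ≤ q k
        · exact moveD_sos q hji.symm hki.symm hkj.symm hqi hqj hqk c1.1 c1.2 hev hsum IH
        · by_cases c2 : q i ≤ q j ∧ q k ≤ q j
          · exact moveD_sos q hki.symm hji.symm hkj hqi hqk hqj c2.1 c2.2 hev hsum IH
          · have d1 := not_and_or.mp c1
            have d2 := not_and_or.mp c2
            have c3 : q j ≤ q i ∧ q k ≤ q i := by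
              rcases d1 with d1 | d1 <;> rcases d2 with d2 | d2 <;> omega
            exact moveD_sos q hkj.symm hji hki hqj hqk hqi c3.1 c3.2 hev hsum IH
      · -- small support
        set S := Finset.univ.filter (fun m => q m ≠ 0) with hS
        have hsc : S.card = 0 ∨ S.card = 1 ∨ S.card = 2 := by omega
        rcases hsc with h0 | h1 | h2
        · exfalso
          have hfe : S = ∅ := Finset.card_eq_zero.1 h0
          have hz : ∀ m, q m = 0 := by
            intro m
            by_contra hm
            have : m ∈ S := by simp [hS, hm]
            simp [hfe] at this
          rw [Finset.sum_eq_zero (fun m _ => hz m)] at hsum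
          omega
        · obtain ⟨i, hi⟩ := Finset.card_eq_one.1 h1
          have hz : ∀ m, m ≠ i → q m = 0 := by
            intro m hm
            by_contra hmm
            have : m ∈ S := by simp [hS, hmm]
            rw [hi] at this
            simp at this
            exact hm this
          have hqi : q i = 2*d := by
            rw [← hsum, Finset.sum_eq_single i (fun m _ hm => hz m hm) (by simp)]
          have hqe : q = (fun k => if k = i then 2*d else 0) := by
            funext m
            by_cases hm : m = i
            · subst hm; simp [hqi]
            · simp [hm, hz m hm]
          rw [hqe, U_single]
          exact IsSumSq.zero
        · obtain ⟨i, j, hij, hij2⟩ := Finset.card_eq_two.1 h2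
          have hz : ∀ m, m ≠ i → m ≠ j → q m = 0 := by
            intro m hm hm'
            by_contra hmm
            have : m ∈ S := by simp [hS, hmm]
            rw [hij2] at this
            simp at this
            tauto
          have hqe : q = Q2 i j (q i) (q j) := by
            funext m
            unfold Q2
            by_cases hm : m = i
            · subst hm; simp
            · by_cases hm' : m = j
              · subst hm'; simp [hm]
              · simp [hm, hm', hz m hm hm']
          have hqs : q i + q j = 2*d := by
            rw [← hsum,
              ← Finset.add_sum_erase _ q (Finset.mem_univ i),
              ← Finset.add_sum_erase _ q
                (by simp [Finset.mem_erase, hij.symm] : j ∈ Finset.univ.erase i),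
              Finset.sum_eq_zero, add_zero]
            intro m hm
            simp only [Finset.mem_erase] at hm
            exact hz m hm.2.1 hm.1
          rw [hqe]
          exact twovar_sos d hij (q i) (q j) hqs

theorem split_exists {n : ℕ} (a : Fin n → ℕ) (m : ℕ) (hm : m ≤ ∑ i, a i) :
    ∃ b : Fin n → ℕ, (∀ i, b i ≤ a i) ∧ ∑ i, b i = m := by
  induction m with
  | zero => exact ⟨0, fun i => Nat.zero_le _, by simp⟩
  | succ m ih =>
      obtain ⟨b, hb, hbs⟩ := ih (by omega)
      have hex : ∃ i, b i < a i := by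
        by_contra hno
        push_neg at hno
        have : ∑ i, a i ≤ ∑ i, b i := Finset.sum_le_sum (fun i _ => hno i)
        omega
      obtain ⟨i, hi⟩ := hex
      refine ⟨Function.update b i (b i + 1), fun m' => ?_, ?_⟩
      · by_cases h' : m' = i
        · subst h'; rw [Function.update_self]; omega
        · rw [Function.update_of_ne h']; exact hb m'
      · rw [Finset.sum_update_of_mem (Finset.mem_univ i)]
        have h2 : ∑ m', b m' = b i + ∑ m' ∈ Finset.univ \ {i}, b m' :=
          Finset.sum_eq_add_sum_sdiff_singleton_of_mem (Finset.mem_univ i) b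
        omega

theorem genU_sos {n d : ℕ} (hd : 1 ≤ d) (a : Fin n → ℕ) (hsum : ∑ i, a i = 2*d) :
    IsSumSq (U d a) := by
  obtain ⟨b, hb, hbs⟩ := split_exists a d (by omega)
  set c : Fin n → ℕ := fun i => a i - b i with hc
  have hbc : b + c = a := by
    funext i
    simp only [Pi.add_apply, hc]
    have := hb i
    omega
  have hcs : ∑ i, c i = d := by
    have h1 : ∑ i, (b i + c i) = 2*d := by
      rw [show (fun i => b i + c i) = a by funext i; rw [← hbc]; rfl]
      · exact hsum
    rw [Finset.sum_add_distrib] at h1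
    omega
  have hm := U_midpoint d b c
  rw [hbc] at hm
  rw [hm]
  have hsb : IsSumSq (U d (2 • b)) := by
    refine evenU_sos_aux hd ((Finset.univ.filter (fun m => (2•b) m ≠ 0)).card) _ le_rfl
      (fun m => ⟨b m, by simp [two_mul]⟩) ?_
    have : ∑ m, (2 • b) m = 2 * ∑ m, b m := by
      rw [Finset.mul_sum]; exact Finset.sum_congr rfl (fun m _ => rfl)
    rw [this, hbs]
  have hsc : IsSumSq (U d (2 • c)) := by
    refine evenU_sos_aux hd ((Finset.univ.filter (fun m => (2•c) m ≠ 0)).card) _ le_rfl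
      (fun m => ⟨c m, by simp [two_mul]⟩) ?_
    have : ∑ m, (2 • c) m = 2 * ∑ m, c m := by
      rw [Finset.mul_sum]; exact Finset.sum_congr rfl (fun m _ => rfl)
    rw [this, hcs]
  exact ((sos_C_mul (by norm_num) hsb).add (sos_C_mul (by norm_num) hsc)).add
    (sos_C_mul (Nat.cast_nonneg d) (sos_sq _))

theorem aeval_U {n d : ℕ} (a : Fin n → ℕ) (c : Fin n → ℝ) (t : ℝ)
    (ht : t = -(((2*d:ℕ):ℝ) * ∏ i, c i ^ a i)) :
    (aeval (fun m => C (c m) * X m) :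
      MvPolynomial (Fin n) ℝ →ₐ[ℝ] MvPolynomial (Fin n) ℝ) (U d a)
    = (∑ i, C ((a i : ℝ) * c i ^ (2*d)) * X i ^ (2*d)) + C t * ∏ i, X i ^ a i := by
  rw [ht]
  simp only [U, map_sub, map_sum, map_mul, map_pow, map_prod, aeval_X, aeval_C, algebraMap_eq,
    mul_pow, Finset.prod_mul_distrib, map_neg]
  ring


theorem diag_tail_sos {n d : ℕ} (hd : 1 ≤ d) (a : Fin n → ℕ) (hsum : ∑ i, a i = 2*d)
    (c : Fin n → ℝ) (t : ℝ) (ht : t = -(((2*d:ℕ):ℝ) * ∏ i, c i ^ a i)) :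
    IsSumSq ((∑ i, C ((a i : ℝ) * c i ^ (2*d)) * X i ^ (2*d))
      + C t * ∏ i, X i ^ a i) := by
  have hU := genU_sos hd a hsum
  have h2 := sos_map ((aeval (fun m => C (c m) * X m) :
    MvPolynomial (Fin n) ℝ →ₐ[ℝ] MvPolynomial (Fin n) ℝ) : MvPolynomial (Fin n) ℝ →+* MvPolynomial (Fin n) ℝ) hU
  rwa [show (((aeval (fun m => C (c m) * X m) :
      MvPolynomial (Fin n) ℝ →ₐ[ℝ] MvPolynomial (Fin n) ℝ) :
      MvPolynomial (Fin n) ℝ →+* MvPolynomial (Fin n) ℝ) (U d a))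
    = (aeval (fun m => C (c m) * X m) :
      MvPolynomial (Fin n) ℝ →ₐ[ℝ] MvPolynomial (Fin n) ℝ) (U d a) from rfl,
    aeval_U a c t ht] at h2

theorem monomial_sos {n : ℕ} (β : Fin n →₀ ℕ) (t : ℝ) (ht : 0 ≤ t) (hev : ∀ i, Even (β i)) :
    IsSumSq (monomial β t) := by
  classical
  set β' : Fin n →₀ ℕ := β.mapRange (·/2) (by simp) with hβ'
  have h2 : β' + β' = β := by
    ext i
    simp only [Finsupp.add_apply, hβ', Finsupp.mapRange_apply]
    obtain ⟨r, hr⟩ := hev i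
    omega
  have he : monomial β t = (monomial β' (Real.sqrt t)) * (monomial β' (Real.sqrt t)) := by
    rw [monomial_mul, h2, Real.mul_self_sqrt ht]
  rw [he]
  simpa using IsSumSq.sq_add (monomial β' (Real.sqrt t)) IsSumSq.zero

theorem prod_cb {n : ℕ} (a : Fin n → ℕ) (base : ℝ) (hbase : 0 ≤ base)
    (hne : (Finset.univ.filter (fun j => a j ≠ 0)).Nonempty) :
    (∏ i, (base ^ ((1:ℝ)/((a i : ℝ) * ((Finset.univ.filter (fun j => a j ≠ 0)).card : ℝ)))) ^ (a i))
      = base := by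
  set nn := (Finset.univ.filter (fun j => a j ≠ 0)).card with hnn
  have hnn0 : (nn:ℝ) ≠ 0 := Nat.cast_ne_zero.2 (Finset.card_pos.2 hne).ne'
  rw [← Finset.prod_subset (Finset.subset_univ (Finset.univ.filter (fun j => a j ≠ 0)))
    (fun i _ hi => by
      simp only [Finset.mem_filter, Finset.mem_univ, true_and, not_not] at hi
      rw [hi, pow_zero])]
  have hcongr : ∀ i ∈ Finset.univ.filter (fun j => a j ≠ 0),
      (base ^ ((1:ℝ)/((a i : ℝ) * (nn : ℝ)))) ^ (a i) = base ^ ((1:ℝ)/(nn:ℝ)) := by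
    intro i hi
    simp only [Finset.mem_filter, Finset.mem_univ, true_and] at hi
    have hai : ((a i : ℕ) : ℝ) ≠ 0 := Nat.cast_ne_zero.2 hi
    rw [← Real.rpow_natCast (base ^ ((1:ℝ)/((a i : ℝ) * (nn : ℝ)))) (a i),
      ← Real.rpow_mul hbase]
    congr 1
    field_simp
  rw [Finset.prod_congr rfl hcongr, Finset.prod_const, ← hnn,
    ← Real.rpow_natCast (base ^ ((1:ℝ)/(nn:ℝ))) nn, ← Real.rpow_mul hbase,
    one_div, inv_mul_cancel₀ hnn0, Real.rpow_one]

theorem monform_eq {n d : ℕ} (α : Fin n →₀ ℕ) (lamv : Fin n → ℝ) (co : ℝ) :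
    (∑ i, monomial (Finsupp.single i (2*d)) (lamv i)) + monomial α co
    = (∑ i, C (lamv i) * X i ^ (2*d)) + C co * ∏ i, X i ^ α i := by
  congr 1
  · exact Finset.sum_congr rfl (fun i _ => (C_mul_X_pow_eq_monomial).symm)
  · rw [monomial_eq]
    congr 1
    rw [Finsupp.prod]
    exact Finset.prod_subset (Finset.subset_univ _)
      (fun i _ hi => by rw [Finsupp.notMem_support_iff.1 hi, pow_zero])

theorem Pa_sos {n d : ℕ} (hd : 1 ≤ d) (α : Fin n →₀ ℕ) (co : ℝ) (hco : co ≠ 0)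
    (hsum : ∑ i, α i = 2*d)
    (hodd : ¬ co < 0 → ∃ i, Odd (α i)) :
    IsSumSq ((∑ i, monomial (Finsupp.single i (2*d))
        (((α i : ℕ) : ℝ) * (|co| / ((2*d : ℕ) : ℝ)) ^
          (((2*d : ℕ) : ℝ) /
            (((α i : ℕ) : ℝ) * ((Finset.univ.filter (fun j => α j ≠ 0)).card : ℝ)))))
      + monomial α co) := by
  classical
  have h2d : ((2*d : ℕ) : ℝ) ≠ 0 := Nat.cast_ne_zero.2 (by omega)
  set base : ℝ := |co| / ((2*d : ℕ) : ℝ) with hbase_def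
  have hbase : 0 ≤ base := by rw [hbase_def]; positivity
  have hne : (Finset.univ.filter (fun j => α j ≠ 0)).Nonempty := by
    by_contra hcon
    rw [Finset.not_nonempty_iff_eq_empty] at hcon
    have hz : ∀ i, α i = 0 := by
      intro i
      by_contra hzz
      have hmem : i ∈ Finset.univ.filter (fun j => α j ≠ 0) := by simp [hzz]
      rw [hcon] at hmem
      simp at hmem
    rw [Finset.sum_eq_zero (fun i _ => hz i)] at hsum
    omega
  set cb : Fin n → ℝ := fun i =>
    base ^ ((1:ℝ)/((α i : ℝ) * ((Finset.univ.filter (fun j => α j ≠ 0)).card : ℝ))) with hcb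
  have fact1 : ∀ (i : Fin n) (x : ℝ), (x = cb i ∨ x = - cb i) →
      x ^ (2*d) = base ^ (((2*d:ℕ):ℝ)/(((α i : ℕ):ℝ) *
        ((Finset.univ.filter (fun j => α j ≠ 0)).card : ℝ))) := by
    intro i x hx
    have hxe : x ^ (2*d) = (cb i)^(2*d) := by
      rcases hx with h | h
      · rw [h]
      · rw [h]; exact Even.neg_pow ⟨d, by ring⟩ _
    rw [hxe, hcb, ← Real.rpow_natCast
      (base ^ ((1:ℝ)/((α i : ℝ) * ((Finset.univ.filter (fun j => α j ≠ 0)).card : ℝ)))) (2*d),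
      ← Real.rpow_mul hbase]
    congr 1
    rw [one_div_mul_eq_div]
  have hprodcb : (∏ i, cb i ^ α i) = base := prod_cb (fun i => α i) base hbase hne
  by_cases hneg : co < 0
  · have hsos := diag_tail_sos hd (fun i => α i) hsum cb co
      (by rw [hprodcb, hbase_def, abs_of_neg hneg]; field_simp)
    rw [monform_eq]
    have heq : (∑ i, C (((α i : ℕ):ℝ) * base ^
          (((2*d:ℕ):ℝ)/(((α i : ℕ):ℝ) *
            ((Finset.univ.filter (fun j => α j ≠ 0)).card : ℝ)))) * X i ^ (2*d))
        = ∑ i, C (((α i : ℕ) : ℝ) * cb i ^ (2*d)) * X i ^ (2*d) :=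
      Finset.sum_congr rfl (fun i _ => by rw [fact1 i (cb i) (Or.inl rfl)])
    rw [heq]
    exact hsos
  · have hpos : 0 < co := lt_of_le_of_ne (not_lt.1 hneg) (Ne.symm hco)
    obtain ⟨i₀, hi₀⟩ := hodd hneg
    set c : Fin n → ℝ := fun i => if i = i₀ then -cb i else cb i with hc
    have hprod : (∏ i, c i ^ α i) = - base := by
      have hstep : ∀ i, c i ^ α i = (if i = i₀ then (-1:ℝ) else 1) * cb i ^ α i := by
        intro i
        by_cases h : i = i₀
        · subst h
          simp only [hc, if_pos rfl]
          rw [neg_pow, Odd.neg_one_pow hi₀]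
          simp
        · simp [hc, h]
      rw [Finset.prod_congr rfl (fun i _ => hstep i), Finset.prod_mul_distrib,
        Finset.prod_ite_eq' Finset.univ i₀ (fun _ => (-1:ℝ)), hprodcb]
      simp
    have hsos := diag_tail_sos hd (fun i => α i) hsum c co
      (by rw [hprod, hbase_def, abs_of_pos hpos]; field_simp)
    rw [monform_eq]
    have heq : (∑ i, C (((α i : ℕ):ℝ) * base ^
          (((2*d:ℕ):ℝ)/(((α i : ℕ):ℝ) *
            ((Finset.univ.filter (fun j => α j ≠ 0)).card : ℝ)))) * X i ^ (2*d))
        = ∑ i, C (((α i : ℕ) : ℝ) * c i ^ (2*d)) * X i ^ (2*d) := by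
      refine Finset.sum_congr rfl (fun i _ => ?_)
      by_cases h : i = i₀
      · subst h; rw [fact1 i (c i) (by simp [hc])]
      · rw [fact1 i (c i) (by simp [hc, h])]
    rw [heq]
    exact hsos

/-- SOS criterion (Corollary 2.6): for a form `f` of degree `2d`, with
`n_α = |{i : α_i ≠ 0}|`, if for every `i`
`f_{2d,i} ≥ Σ_{α∈Δ, α_i≠0} α_i·(|f_α|/(2d))^{2d/(α_i·n_α)}`,
then `f` is a sum of squares. -/
theorem newcrt_sos {n d : ℕ} (hd : 1 ≤ d) (f : MvPolynomial (Fin n) ℝ)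
    (hf : f.IsHomogeneous (2 * d)) (Δ : Finset (Fin n →₀ ℕ))
    (hΔ : ∀ α, α ∈ Δ ↔ α ∈ f.support ∧ (¬ ∃ i, α = Finsupp.single i (2 * d)) ∧
      (f.coeff α < 0 ∨ ∃ i, Odd (α i)))
    (h : ∀ i, ∑ α ∈ Δ with α i ≠ 0,
        ((α i : ℕ) : ℝ) * (|f.coeff α| / ((2 * d : ℕ) : ℝ)) ^
          (((2 * d : ℕ) : ℝ) /
            (((α i : ℕ) : ℝ) * ((Finset.univ.filter (fun j => α j ≠ 0)).card : ℝ)))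
      ≤ f.coeff (Finsupp.single i (2 * d))) :
    IsSumSq f := by
  classical
  set lam : (Fin n →₀ ℕ) → Fin n → ℝ := fun α i =>
    ((α i : ℕ) : ℝ) * (|f.coeff α| / ((2 * d : ℕ) : ℝ)) ^
      (((2 * d : ℕ) : ℝ) / (((α i : ℕ) : ℝ) *
        ((Finset.univ.filter (fun j => α j ≠ 0)).card : ℝ))) with hlam
  set Pa : (Fin n →₀ ℕ) → MvPolynomial (Fin n) ℝ := fun α =>
    (∑ i, monomial (Finsupp.single i (2*d)) (lam α i)) + monomial α (f.coeff α) with hPa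
  have hsumdeg : ∀ α ∈ Δ, ∑ i, α i = 2*d := by
    intro α hα
    obtain ⟨hs, -, -⟩ := (hΔ α).1 hα
    have h1 := hf (mem_support_iff.1 hs)
    rw [← h1, Finsupp.weight_apply, Finsupp.sum_fintype]
    · simp
    · simp
  have hPsos : IsSumSq (∑ α ∈ Δ, Pa α) := by
    refine Finset.sum_induction _ _ (fun a b ha hb => ha.add hb) IsSumSq.zero ?_
    intro α hα
    obtain ⟨hs, hnsingle, hsign⟩ := (hΔ α).1 hα
    exact Pa_sos hd α (f.coeff α) (mem_support_iff.1 hs) (hsumdeg α hα)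
      (fun hnn => by
        rcases hsign with h' | h'
        · exact absurd h' hnn
        · exact h')
  have key : f = (∑ α ∈ Δ, Pa α) + (f - ∑ α ∈ Δ, Pa α) := by ring
  rw [key]
  refine hPsos.add ?_
  set R := f - ∑ α ∈ Δ, Pa α with hR
  have hRcoeff : ∀ β, R.coeff β = f.coeff β -
      ∑ α ∈ Δ, ((∑ i, if Finsupp.single i (2*d) = β then lam α i else 0)
        + (if α = β then f.coeff α else 0)) := by
    intro β
    rw [hR, coeff_sub, coeff_sum]
    congr 1
    refine Finset.sum_congr rfl (fun α _ => ?_)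
    rw [hPa]
    simp only [coeff_add, coeff_sum, coeff_monomial]
  rw [← support_sum_monomial_coeff R]
  refine Finset.sum_induction _ _ (fun a b ha hb => ha.add hb) IsSumSq.zero ?_
  intro β hβ
  have hcne : R.coeff β ≠ 0 := mem_support_iff.1 hβ
  by_cases hb1 : ∃ i₀, β = Finsupp.single i₀ (2*d)
  · obtain ⟨i₀, hβi⟩ := hb1
    have hval : R.coeff β = f.coeff (Finsupp.single i₀ (2*d)) - ∑ α ∈ Δ, lam α i₀ := by
      rw [hRcoeff β, hβi]
      congr 1
      refine Finset.sum_congr rfl (fun α hα => ?_)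
      obtain ⟨-, hnsingle, -⟩ := (hΔ α).1 hα
      rw [if_neg (fun he : α = Finsupp.single i₀ (2*d) => hnsingle ⟨i₀, he⟩), add_zero]
      have hthis : ∀ i : Fin n,
          (if Finsupp.single i (2*d) = Finsupp.single i₀ (2*d) then lam α i else 0)
          = if i = i₀ then lam α i else 0 := by
        intro i
        by_cases hii : i = i₀
        · subst hii; simp
        · rw [if_neg hii, if_neg (fun he => hii ((Finsupp.single_left_inj (by omega)).1 he))]
      rw [Finset.sum_congr rfl (fun i _ => hthis i),
        Finset.sum_ite_eq' Finset.univ i₀ (lam α), if_pos (Finset.mem_univ i₀)]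
    have hnn : 0 ≤ R.coeff β := by
      rw [hval]
      have hh := h i₀
      have hfe : ∑ α ∈ Δ with α i₀ ≠ 0, lam α i₀ = ∑ α ∈ Δ, lam α i₀ := by
        apply Finset.sum_filter_of_ne
        intro α _ hlne
        by_contra hz0
        refine hlne ?_
        rw [hlam]
        simp [hz0]
      rw [← hfe]
      simp only [hlam]
      linarith [hh]
    have hev : ∀ i, Even (β i) := by
      intro i
      rw [hβi, Finsupp.single_apply]
      split
      · exact ⟨d, by ring⟩
      · exact Even.zero
    exact monomial_sos β _ hnn hev
  · have hinner : ∀ α, (∑ i, if Finsupp.single i (2*d) = β then lam α i else 0) = 0 :=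
      fun α => Finset.sum_eq_zero (fun i _ => if_neg (fun he => hb1 ⟨i, he.symm⟩))
    by_cases hb2 : β ∈ Δ
    · exfalso
      apply hcne
      rw [hRcoeff β]
      rw [Finset.sum_congr rfl (fun α (_ : α ∈ Δ) => by rw [hinner α, zero_add]),
        Finset.sum_ite_eq' Δ β (fun α => f.coeff α), if_pos hb2]
      ring
    · have hval : R.coeff β = f.coeff β := by
        rw [hRcoeff β,
          Finset.sum_congr rfl (fun α (_ : α ∈ Δ) => by rw [hinner α, zero_add]),
          Finset.sum_ite_eq' Δ β (fun α => f.coeff α), if_neg hb2]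
        ring
      have hsupp : β ∈ f.support := by
        rw [mem_support_iff]
        rw [hval] at hcne
        exact hcne
      have hno : ¬(f.coeff β < 0 ∨ ∃ i, Odd (β i)) :=
        fun hcon => hb2 ((hΔ β).2 ⟨hsupp, hb1, hcon⟩)
      push_neg at hno
      exact monomial_sos β _ (by rw [hval]; exact hno.1)
        (fun i => Nat.not_odd_iff_even.1 (hno.2 i))
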